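/- For the peaked function of Chen–Liu–Zhang: with χ(ξ) = −(c+K₁)cosh ξ + K₁, K₁ < 0, c > |K₁|, and u = χ + √(χ²−c²), one has (u(ξ)−c)² = (χ(ξ)−c)² + (χ(ξ)²−c²) + 2(χ(ξ)−c)√(χ(ξ)²−c²), and its derivative for ξ > 0 tends, as ξ ↓ 0, to −4c√(c(c+K₁)) (while for ξ < 0 as ξ ↑ 0 it tends to +4c√(c(c+K₁))). -/

import Mathlib

open Real Filter Set

theorem peaked_expansion_and_limits (c K₁ : ℝ) (hK₁ : K₁ < 0) (hc : -K₁ < c)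
    (χ u : ℝ → ℝ)
    (hχ : ∀ ξ : ℝ, χ ξ = -(c + K₁) * Real.cosh ξ + K₁)
    (hu : ∀ ξ : ℝ, u ξ = χ ξ + Real.sqrt (χ ξ ^ 2 - c ^ 2)) :
    (∀ ξ : ℝ, (u ξ - c) ^ 2 =
        (χ ξ - c) ^ 2 + (χ ξ ^ 2 - c ^ 2) +
          2 * (χ ξ - c) * Real.sqrt (χ ξ ^ 2 - c ^ 2)) ∧
      Filter.Tendsto (deriv (fun ξ => (u ξ - c) ^ 2))
        (nhdsWithin 0 (Set.Ioi 0))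
        (nhds (-4 * c * Real.sqrt (c * (c + K₁)))) ∧
      Filter.Tendsto (deriv (fun ξ => (u ξ - c) ^ 2))
        (nhdsWithin 0 (Set.Iio 0))
        (nhds (4 * c * Real.sqrt (c * (c + K₁)))) := by
  have hcK : 0 < c + K₁ := by linarith
  have hc0 : 0 < c := by linarith
  have hχfun : χ = fun ξ => -(c + K₁) * Real.cosh ξ + K₁ := funext hχ
  have hufun : u = fun ξ => χ ξ + Real.sqrt (χ ξ ^ 2 - c ^ 2) := funext hu
  have hχle : ∀ ξ : ℝ, χ ξ ≤ -c := by
    intro ξ; rw [hχ ξ]; nlinarith [Real.one_le_cosh ξ]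
  have hχlt : ∀ ξ : ℝ, ξ ≠ 0 → χ ξ < -c := by
    intro ξ hξ; rw [hχ ξ]
    have := Real.one_lt_cosh.mpr hξ
    nlinarith
  have hqnn : ∀ ξ : ℝ, 0 ≤ χ ξ ^ 2 - c ^ 2 := by
    intro ξ; nlinarith [hχle ξ, hc0]
  have hqpos : ∀ ξ : ℝ, ξ ≠ 0 → 0 < χ ξ ^ 2 - c ^ 2 := by
    intro ξ hξ; nlinarith [hχlt ξ hξ, hc0]
  have hApos : ∀ ξ : ℝ, 0 < 2 * (c + K₁) * (c - χ ξ) := by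
    intro ξ; nlinarith [hχle ξ, hc0]
  -- Part 1
  have part1 : ∀ ξ : ℝ, (u ξ - c) ^ 2 =
      (χ ξ - c) ^ 2 + (χ ξ ^ 2 - c ^ 2) +
        2 * (χ ξ - c) * Real.sqrt (χ ξ ^ 2 - c ^ 2) := by
    intro ξ
    have hs2 : Real.sqrt (χ ξ ^ 2 - c ^ 2) ^ 2 = χ ξ ^ 2 - c ^ 2 :=
      Real.sq_sqrt (hqnn ξ)
    rw [hu ξ]; linear_combination hs2
  -- derivative of χ
  have hχd : ∀ ξ₀ : ℝ, HasDerivAt χ (-(c + K₁) * Real.sinh ξ₀) ξ₀ := by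
    intro ξ₀; rw [hχfun]
    exact ((Real.hasDerivAt_cosh ξ₀).const_mul (-(c + K₁))).add_const K₁
  -- derivative of (u - c)^2 away from 0
  have hderiv : ∀ ξ₀ : ℝ, ξ₀ ≠ 0 →
      deriv (fun ξ => (u ξ - c) ^ 2) ξ₀ =
        2 * (u ξ₀ - c) * ((-(c + K₁) * Real.sinh ξ₀) +
          (2 * χ ξ₀ * (-(c + K₁) * Real.sinh ξ₀)) /
            (2 * Real.sqrt (χ ξ₀ ^ 2 - c ^ 2))) := by
    intro ξ₀ hξ₀
    have hqd : HasDerivAt (fun ξ => χ ξ ^ 2 - c ^ 2)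
        (2 * χ ξ₀ * (-(c + K₁) * Real.sinh ξ₀)) ξ₀ := by
      have h := ((hχd ξ₀).fun_pow 2).sub_const (c ^ 2)
      exact h.congr_deriv (by push_cast; ring)
    have hsd := hqd.sqrt (ne_of_gt (hqpos ξ₀ hξ₀))
    have hud : HasDerivAt u ((-(c + K₁) * Real.sinh ξ₀) +
        (2 * χ ξ₀ * (-(c + K₁) * Real.sinh ξ₀)) /
          (2 * Real.sqrt (χ ξ₀ ^ 2 - c ^ 2))) ξ₀ := by
      rw [hufun]; exact (hχd ξ₀).add hsd
    have hFd := (hud.sub_const c).fun_pow 2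
    rw [hFd.deriv]; push_cast; ring
  -- half-angle expression for the square root
  have hs_abs : ∀ ξ₀ : ℝ, Real.sqrt (χ ξ₀ ^ 2 - c ^ 2) =
      Real.sqrt (2 * (c + K₁) * (c - χ ξ₀)) * |Real.sinh (ξ₀ / 2)| := by
    intro ξ₀
    have hcosh : Real.cosh ξ₀ = 1 + 2 * Real.sinh (ξ₀ / 2) ^ 2 := by
      have h := Real.cosh_two_mul (ξ₀ / 2)
      rw [show 2 * (ξ₀ / 2) = ξ₀ by ring] at h
      rw [h, Real.cosh_sq]; ring
    have hXC : χ ξ₀ + c = -2 * (c + K₁) * Real.sinh (ξ₀ / 2) ^ 2 := by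
      rw [hχ ξ₀, hcosh]; ring
    have hq_eq : χ ξ₀ ^ 2 - c ^ 2 =
        (2 * (c + K₁) * (c - χ ξ₀)) * Real.sinh (ξ₀ / 2) ^ 2 := by
      linear_combination (χ ξ₀ - c) * hXC
    rw [hq_eq, Real.sqrt_mul (le_of_lt (hApos ξ₀)), Real.sqrt_sq_eq_abs]
  have hsinh2 : ∀ ξ₀ : ℝ, Real.sinh ξ₀ =
      2 * Real.sinh (ξ₀ / 2) * Real.cosh (ξ₀ / 2) := by
    intro ξ₀
    have h := Real.sinh_two_mul (ξ₀ / 2)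
    rw [show 2 * (ξ₀ / 2) = ξ₀ by ring] at h
    exact h
  -- the continuous one-sided formulas
  set Gp : ℝ → ℝ := fun ξ => 2 * (u ξ - c) * (-(c + K₁) * Real.sinh ξ -
      2 * (c + K₁) * Real.cosh (ξ / 2) * χ ξ /
        Real.sqrt (2 * (c + K₁) * (c - χ ξ))) with hGp
  set Gm : ℝ → ℝ := fun ξ => 2 * (u ξ - c) * (-(c + K₁) * Real.sinh ξ +
      2 * (c + K₁) * Real.cosh (ξ / 2) * χ ξ /
        Real.sqrt (2 * (c + K₁) * (c - χ ξ))) with hGm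
  have hsqApos : ∀ ξ₀ : ℝ, 0 < Real.sqrt (2 * (c + K₁) * (c - χ ξ₀)) := by
    intro ξ₀; exact Real.sqrt_pos.mpr (hApos ξ₀)
  -- identity on the right
  have hright : ∀ ξ₀ : ℝ, 0 < ξ₀ → deriv (fun ξ => (u ξ - c) ^ 2) ξ₀ = Gp ξ₀ := by
    intro ξ₀ hξ₀
    have hS : 0 < Real.sinh (ξ₀ / 2) := Real.sinh_pos_iff.mpr (by linarith)
    have key : (2 * χ ξ₀ * (-(c + K₁) * Real.sinh ξ₀)) /
        (2 * Real.sqrt (χ ξ₀ ^ 2 - c ^ 2)) =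
        -(2 * (c + K₁) * Real.cosh (ξ₀ / 2) * χ ξ₀ /
          Real.sqrt (2 * (c + K₁) * (c - χ ξ₀))) := by
      rw [hs_abs ξ₀, abs_of_pos hS, hsinh2 ξ₀]
      set R := Real.sqrt (2 * (c + K₁) * (c - χ ξ₀)) with hR
      have hRne : R ≠ 0 := ne_of_gt (hsqApos ξ₀)
      have hSne : Real.sinh (ξ₀ / 2) ≠ 0 := ne_of_gt hS
      field_simp
      try ring
    simp only [hGp]
    rw [hderiv ξ₀ (ne_of_gt hξ₀), key]
    ring
  have hleft : ∀ ξ₀ : ℝ, ξ₀ < 0 → deriv (fun ξ => (u ξ - c) ^ 2) ξ₀ = Gm ξ₀ := by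
    intro ξ₀ hξ₀
    have hS : Real.sinh (ξ₀ / 2) < 0 := by
      have h2 : 0 < Real.sinh (-(ξ₀ / 2)) := Real.sinh_pos_iff.mpr (by linarith)
      rw [Real.sinh_neg] at h2; linarith
    have key : (2 * χ ξ₀ * (-(c + K₁) * Real.sinh ξ₀)) /
        (2 * Real.sqrt (χ ξ₀ ^ 2 - c ^ 2)) =
        (2 * (c + K₁) * Real.cosh (ξ₀ / 2) * χ ξ₀ /
          Real.sqrt (2 * (c + K₁) * (c - χ ξ₀))) := by
      rw [hs_abs ξ₀, abs_of_neg hS, hsinh2 ξ₀]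
      set R := Real.sqrt (2 * (c + K₁) * (c - χ ξ₀)) with hR
      have hRne : R ≠ 0 := ne_of_gt (hsqApos ξ₀)
      have hSne : Real.sinh (ξ₀ / 2) ≠ 0 := ne_of_lt hS
      field_simp
      try ring
    simp only [hGm]
    rw [hderiv ξ₀ (ne_of_lt hξ₀), key]
  -- continuity
  have hχc : Continuous χ := by
    rw [hχfun]; exact (continuous_const.mul Real.continuous_cosh).add continuous_const
  have huc : Continuous u := by
    rw [hufun]
    exact hχc.add (((hχc.pow 2).sub continuous_const).sqrt)
  have hdenc : Continuous fun ξ => Real.sqrt (2 * (c + K₁) * (c - χ ξ)) :=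
    (continuous_const.mul (continuous_const.sub hχc)).sqrt
  have hdenne : Real.sqrt (2 * (c + K₁) * (c - χ 0)) ≠ 0 := ne_of_gt (hsqApos 0)
  have hnumc : Continuous fun ξ => 2 * (c + K₁) * Real.cosh (ξ / 2) * χ ξ :=
    (continuous_const.mul (Real.continuous_cosh.comp (continuous_id.div_const 2))).mul hχc
  have hsinhc : Continuous fun ξ : ℝ => -(c + K₁) * Real.sinh ξ :=
    continuous_const.mul Real.continuous_sinh
  have hGpc : ContinuousAt Gp 0 := by
    apply ContinuousAt.mul
    · exact (continuous_const.mul (huc.sub continuous_const)).continuousAt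
    · exact hsinhc.continuousAt.sub
        (ContinuousAt.div hnumc.continuousAt hdenc.continuousAt hdenne)
  have hGmc : ContinuousAt Gm 0 := by
    apply ContinuousAt.mul
    · exact (continuous_const.mul (huc.sub continuous_const)).continuousAt
    · exact hsinhc.continuousAt.add
        (ContinuousAt.div hnumc.continuousAt hdenc.continuousAt hdenne)
  -- values at 0
  have hχ0 : χ 0 = -c := by rw [hχ 0, Real.cosh_zero]; ring
  have hu0 : u 0 = -c := by
    rw [hu 0, hχ0, show (-c) ^ 2 - c ^ 2 = 0 by ring, Real.sqrt_zero, add_zero]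
  have hden0 : Real.sqrt (2 * (c + K₁) * (c - χ 0)) =
      2 * Real.sqrt (c * (c + K₁)) := by
    rw [hχ0, show 2 * (c + K₁) * (c - -c) = 4 * (c * (c + K₁)) by ring,
      Real.sqrt_mul (by norm_num : (0:ℝ) ≤ 4),
      show Real.sqrt 4 = 2 by
        rw [show (4:ℝ) = 2 ^ 2 by norm_num, Real.sqrt_sq (by norm_num : (0:ℝ) ≤ 2)]]
  have htpos : 0 < Real.sqrt (c * (c + K₁)) :=
    Real.sqrt_pos.mpr (by positivity)
  have ht2 : Real.sqrt (c * (c + K₁)) ^ 2 = c * (c + K₁) :=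
    Real.sq_sqrt (by positivity)
  have h5 : 2 * (c + K₁) * Real.cosh (0 / 2) * χ 0 / (2 * Real.sqrt (c * (c + K₁))) =
      -Real.sqrt (c * (c + K₁)) := by
    rw [hχ0, show (0:ℝ) / 2 = 0 by norm_num, Real.cosh_zero,
      div_eq_iff (by positivity : (2 : ℝ) * Real.sqrt (c * (c + K₁)) ≠ 0)]
    linear_combination 2 * ht2
  have hGp0 : Gp 0 = -4 * c * Real.sqrt (c * (c + K₁)) := by
    simp only [hGp]
    rw [hden0, h5, hu0, Real.sinh_zero]
    ring
  have hGm0 : Gm 0 = 4 * c * Real.sqrt (c * (c + K₁)) := by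
    simp only [hGm]
    rw [hden0, h5, hu0, Real.sinh_zero]
    ring
  refine ⟨part1, ?_, ?_⟩
  · have ht : Filter.Tendsto Gp (nhdsWithin 0 (Set.Ioi 0)) (nhds (Gp 0)) :=
      (hGpc.tendsto).mono_left nhdsWithin_le_nhds
    rw [hGp0] at ht
    refine ht.congr' ?_
    filter_upwards [self_mem_nhdsWithin] with ξ hξ
    exact (hright ξ hξ).symm
  · have ht : Filter.Tendsto Gm (nhdsWithin 0 (Set.Iio 0)) (nhds (Gm 0)) :=
      (hGmc.tendsto).mono_left nhdsWithin_le_nhds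
    rw [hGm0] at ht
    refine ht.congr' ?_
    filter_upwards [self_mem_nhdsWithin] with ξ hξ
    exact (hleft ξ hξ).symm
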